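/- Let K : ℝ³ → ℂ be integrable and f₁ ∈ L^{q₁}(ℝ), f₂ ∈ L^{q₂}(ℝ), f₃ ∈ L^{q₃}(ℝ) with 1/p = 1/q₁ + 1/q₂ + 1/q₃, all exponents in [1,∞]. Then x ↦ ∭ K(x-x₁, x-x₂, x-x₃) f₁(x₁) f₂(x₂) f₃(x₃) dx₁dx₂dx₃ lies in L^p(ℝ) with norm at most ‖K‖_{L¹(ℝ³)} ‖f₁‖_{L^{q₁}} ‖f₂‖_{L^{q₂}} ‖f₃‖_{L^{q₃}}. -/

import Mathlib

open MeasureTheory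
open scoped ENNReal




set_option maxHeartbeats 1000000

namespace TrilinearAux


/-- The pointwise product of translated norms. -/
noncomputable def trih (f₁ f₂ f₃ : ℝ → ℂ) (z : ℝ × ℝ × ℝ) (x : ℝ) : ℝ≥0∞ :=
  (‖f₁ (x - z.1)‖₊ : ℝ≥0∞) * ‖f₂ (x - z.2.1)‖₊ * ‖f₃ (x - z.2.2)‖₊

/-- Majorant function. -/
noncomputable def triPhi (K : ℝ × ℝ × ℝ → ℂ) (f₁ f₂ f₃ : ℝ → ℂ) (x : ℝ) : ℝ≥0∞ :=
  ∫⁻ z, (‖K z‖₊ : ℝ≥0∞) * trih f₁ f₂ f₃ z x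

/-- Kernel-times-translates. -/
noncomputable def triW (K : ℝ × ℝ × ℝ → ℂ) (f₁ f₂ f₃ : ℝ → ℂ) (q : ℝ × (ℝ × ℝ × ℝ)) : ℂ :=
  K q.2 * f₁ (q.1 - q.2.1) * f₂ (q.1 - q.2.2.1) * f₃ (q.1 - q.2.2.2)

variable {α : Type*} [MeasurableSpace α] {μ : Measure α}

/-- Triple Hölder inequality. -/
lemma holder3 {g₁ g₂ g₃ : α → ℂ} (h₁ : AEStronglyMeasurable g₁ μ)
    (h₂ : AEStronglyMeasurable g₂ μ) (h₃ : AEStronglyMeasurable g₃ μ)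
    {p q₁ q₂ q₃ : ℝ≥0∞} (hexp : 1 / p = 1 / q₁ + 1 / q₂ + 1 / q₃) :
    eLpNorm (fun x => g₁ x * g₂ x * g₃ x) p μ ≤
      eLpNorm g₁ q₁ μ * eLpNorm g₂ q₂ μ * eLpNorm g₃ q₃ μ := by
  set s : ℝ≥0∞ := (1 / q₂ + 1 / q₃)⁻¹ with hs
  have hs' : 1 / s = 1 / q₂ + 1 / q₃ := by rw [hs, one_div, inv_inv]
  have h23 : eLpNorm (fun x => g₂ x * g₃ x) s μ ≤ eLpNorm g₂ q₂ μ * eLpNorm g₃ q₃ μ :=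
    by have := eLpNorm_le_eLpNorm_mul_eLpNorm_of_nnnorm h₂ h₃ (· * ·) 1
        (Filter.Eventually.of_forall fun x => by simp [nnnorm_mul])
        (p := q₂) (q := q₃) (r := s) (hpqr := ⟨by rw [← one_div, ← one_div, ← one_div, hs']⟩)
       rw [ENNReal.coe_one, one_mul] at this; exact this
  have h123 : eLpNorm (fun x => g₁ x * (g₂ x * g₃ x)) p μ ≤
      eLpNorm g₁ q₁ μ * eLpNorm (fun x => g₂ x * g₃ x) s μ :=
    by have := eLpNorm_le_eLpNorm_mul_eLpNorm_of_nnnorm h₁ (h₂.mul h₃) (· * ·) 1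
        (Filter.Eventually.of_forall fun x => by simp [nnnorm_mul])
        (p := q₁) (q := s) (r := p) (hpqr := ⟨by rw [← one_div, ← one_div, ← one_div, hexp, hs', add_assoc]⟩)
       rw [ENNReal.coe_one, one_mul] at this; exact this
  calc eLpNorm (fun x => g₁ x * g₂ x * g₃ x) p μ
      = eLpNorm (fun x => g₁ x * (g₂ x * g₃ x)) p μ := by simp_rw [mul_assoc]
    _ ≤ eLpNorm g₁ q₁ μ * eLpNorm (fun x => g₂ x * g₃ x) s μ := h123
    _ ≤ eLpNorm g₁ q₁ μ * (eLpNorm g₂ q₂ μ * eLpNorm g₃ q₃ μ) := mul_le_mul_right h23 _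
    _ = _ := (mul_assoc _ _ _).symm

/-- Slice bound: translated triple product has `eLpNorm` bounded by the product of norms. -/
lemma slice_bound (f₁ f₂ f₃ : ℝ → ℂ) (hf₁ : Measurable f₁) (hf₂ : Measurable f₂)
    (hf₃ : Measurable f₃) {p q₁ q₂ q₃ : ℝ≥0∞} (hexp : 1 / p = 1 / q₁ + 1 / q₂ + 1 / q₃)
    (z : ℝ × ℝ × ℝ) :
    eLpNorm (fun x => f₁ (x - z.1) * f₂ (x - z.2.1) * f₃ (x - z.2.2)) p volume ≤
      eLpNorm f₁ q₁ volume * eLpNorm f₂ q₂ volume * eLpNorm f₃ q₃ volume := by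
  have m₁ : Measurable fun x : ℝ => f₁ (x - z.1) := hf₁.comp (measurable_id.sub measurable_const)
  have m₂ : Measurable fun x : ℝ => f₂ (x - z.2.1) := hf₂.comp (measurable_id.sub measurable_const)
  have m₃ : Measurable fun x : ℝ => f₃ (x - z.2.2) := hf₃.comp (measurable_id.sub measurable_const)
  have e₁ : eLpNorm (fun x : ℝ => f₁ (x - z.1)) q₁ volume = eLpNorm f₁ q₁ volume :=
    eLpNorm_comp_measurePreserving hf₁.aestronglyMeasurable
      (measurePreserving_sub_right volume z.1)
  have e₂ : eLpNorm (fun x : ℝ => f₂ (x - z.2.1)) q₂ volume = eLpNorm f₂ q₂ volume :=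
    eLpNorm_comp_measurePreserving hf₂.aestronglyMeasurable
      (measurePreserving_sub_right volume z.2.1)
  have e₃ : eLpNorm (fun x : ℝ => f₃ (x - z.2.2)) q₃ volume = eLpNorm f₃ q₃ volume :=
    eLpNorm_comp_measurePreserving hf₃.aestronglyMeasurable
      (measurePreserving_sub_right volume z.2.2)
  calc eLpNorm (fun x => f₁ (x - z.1) * f₂ (x - z.2.1) * f₃ (x - z.2.2)) p volume
      ≤ eLpNorm (fun x : ℝ => f₁ (x - z.1)) q₁ volume *
          eLpNorm (fun x : ℝ => f₂ (x - z.2.1)) q₂ volume *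
          eLpNorm (fun x : ℝ => f₃ (x - z.2.2)) q₃ volume :=
        holder3 m₁.aestronglyMeasurable m₂.aestronglyMeasurable m₃.aestronglyMeasurable hexp
    _ = _ := by rw [e₁, e₂, e₃]

/-- a.e. measurability of a parametrized lintegral. -/
lemma aemeasurable_lintegral_prod_right {β : Type*} [MeasurableSpace β]
    {ν : Measure β} [SFinite ν] [SFinite μ] {f : α × β → ℝ≥0∞}
    (hf : AEMeasurable f (μ.prod ν)) :
    AEMeasurable (fun x => ∫⁻ y, f (x, y) ∂ν) μ := by
  refine ⟨fun x => ∫⁻ y, hf.mk f (x, y) ∂ν, hf.measurable_mk.lintegral_prod_right', ?_⟩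
  filter_upwards [Measure.ae_ae_of_ae_prod hf.ae_eq_mk] with x hx using lintegral_congr_ae hx



/-- For a measurable `f` and a projection `π` whose preimages of null sets are null,
a.e. on the product space the translated value is bounded by the essential sup. -/
lemma ae_shift_le (f : ℝ → ℂ) (hf : Measurable f)
    (π : (ℝ × ℝ × ℝ) → ℝ) (hπ : Measurable π)
    (hsec : ∀ A : Set ℝ, MeasurableSet A → volume A = 0 →
      (volume : Measure (ℝ × ℝ × ℝ)) (π ⁻¹' A) = 0) :
    ∀ᵐ q ∂((volume : Measure ℝ).prod (volume : Measure (ℝ × ℝ × ℝ))),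
      (‖f (q.1 - π q.2)‖₊ : ℝ≥0∞) ≤ eLpNormEssSup f volume := by
  set S : Set ℝ := {t | ¬ ((‖f t‖₊ : ℝ≥0∞) ≤ eLpNormEssSup f volume)} with hSdef
  have hSmeas : MeasurableSet S := by
    have : S = {t | eLpNormEssSup f volume < (‖f t‖₊ : ℝ≥0∞)} := by
      ext t; simp [hSdef, not_le]
    rw [this]
    exact measurableSet_lt measurable_const hf.enorm
  have hS0 : volume S = 0 := ae_iff.mp (ae_le_eLpNormEssSup (f := f) (μ := volume))
  have hφ : Measurable fun q : ℝ × (ℝ × ℝ × ℝ) => q.1 - π q.2 :=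
    measurable_fst.sub (hπ.comp measurable_snd)
  have hE : MeasurableSet ((fun q : ℝ × (ℝ × ℝ × ℝ) => q.1 - π q.2) ⁻¹' S) := hφ hSmeas
  have hE0 : ((volume : Measure ℝ).prod (volume : Measure (ℝ × ℝ × ℝ)))
      ((fun q : ℝ × (ℝ × ℝ × ℝ) => q.1 - π q.2) ⁻¹' S) = 0 := by
    rw [Measure.measure_prod_null hE]
    refine Filter.Eventually.of_forall fun x => ?_
    have hmp : MeasurePreserving (fun t : ℝ => x - t) volume volume := by
      have h1 : MeasurePreserving (fun t : ℝ => x + t) volume volume :=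
        measurePreserving_add_left volume x
      have h2 : MeasurePreserving (fun t : ℝ => -t) volume volume :=
        Measure.measurePreserving_neg volume
      have := h1.comp h2
      simpa [Function.comp_def, sub_eq_add_neg] using this
    have hA0 : volume ((fun t : ℝ => x - t) ⁻¹' S) = 0 := by
      rw [hmp.measure_preimage hSmeas.nullMeasurableSet]; exact hS0
    have : (Prod.mk x ⁻¹' ((fun q : ℝ × (ℝ × ℝ × ℝ) => q.1 - π q.2) ⁻¹' S))
        = π ⁻¹' ((fun t : ℝ => x - t) ⁻¹' S) := by
      ext z; simp [Set.mem_preimage]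
    simp only [this]
    exact hsec _ (hmp.measurable hSmeas) hA0
  have : ∀ᵐ q ∂((volume : Measure ℝ).prod (volume : Measure (ℝ × ℝ × ℝ))),
      q ∉ ((fun q : ℝ × (ℝ × ℝ × ℝ) => q.1 - π q.2) ⁻¹' S) :=
    measure_eq_zero_iff_ae_notMem.mp hE0
  filter_upwards [this] with q hq
  simpa [hSdef, Set.mem_preimage] using hq

lemma sec_fst (A : Set ℝ) (_hA : MeasurableSet A) (h0 : volume A = 0) :
    (volume : Measure (ℝ × ℝ × ℝ)) ((fun z : ℝ × ℝ × ℝ => z.1) ⁻¹' A) = 0 := by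
  have : (fun z : ℝ × ℝ × ℝ => z.1) ⁻¹' A = A ×ˢ (Set.univ : Set (ℝ × ℝ)) := by
    ext z; simp
  rw [this, Measure.volume_eq_prod, Measure.prod_prod, h0, zero_mul]

lemma sec_snd_fst (A : Set ℝ) (_hA : MeasurableSet A) (h0 : volume A = 0) :
    (volume : Measure (ℝ × ℝ × ℝ)) ((fun z : ℝ × ℝ × ℝ => z.2.1) ⁻¹' A) = 0 := by
  have : (fun z : ℝ × ℝ × ℝ => z.2.1) ⁻¹' A
      = (Set.univ : Set ℝ) ×ˢ (A ×ˢ (Set.univ : Set ℝ)) := by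
    ext z; simp
  rw [this, Measure.volume_eq_prod, Measure.prod_prod, Measure.volume_eq_prod,
    Measure.prod_prod, h0, zero_mul, mul_zero]

lemma sec_snd_snd (A : Set ℝ) (_hA : MeasurableSet A) (h0 : volume A = 0) :
    (volume : Measure (ℝ × ℝ × ℝ)) ((fun z : ℝ × ℝ × ℝ => z.2.2) ⁻¹' A) = 0 := by
  have : (fun z : ℝ × ℝ × ℝ => z.2.2) ⁻¹' A
      = (Set.univ : Set ℝ) ×ˢ ((Set.univ : Set ℝ) ×ˢ A) := by
    ext z; simp
  rw [this, Measure.volume_eq_prod, Measure.prod_prod, Measure.volume_eq_prod,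
    Measure.prod_prod, h0, mul_zero, mul_zero]



lemma trih_measurable {f₁ f₂ f₃ : ℝ → ℂ} (hf₁ : Measurable f₁) (hf₂ : Measurable f₂)
    (hf₃ : Measurable f₃) :
    Measurable fun q : ℝ × (ℝ × ℝ × ℝ) => trih f₁ f₂ f₃ q.2 q.1 := by
  unfold trih
  exact (((hf₁.comp (measurable_fst.sub (measurable_snd.fst))).enorm.mul
      (hf₂.comp (measurable_fst.sub measurable_snd.snd.fst)).enorm).mul
      (hf₃.comp (measurable_fst.sub measurable_snd.snd.snd)).enorm)

/-- Slice lintegral bound, p finite version. -/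
lemma slice_lintegral (f₁ f₂ f₃ : ℝ → ℂ) (hf₁ : Measurable f₁) (hf₂ : Measurable f₂)
    (hf₃ : Measurable f₃) {p q₁ q₂ q₃ : ℝ≥0∞} (hexp : 1 / p = 1 / q₁ + 1 / q₂ + 1 / q₃)
    (hp0 : p ≠ 0) (hptop : p ≠ ⊤) (z : ℝ × ℝ × ℝ) :
    ∫⁻ x, (trih f₁ f₂ f₃ z x) ^ p.toReal ∂(volume : Measure ℝ) ≤
      (eLpNorm f₁ q₁ volume * eLpNorm f₂ q₂ volume * eLpNorm f₃ q₃ volume) ^ p.toReal := by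
  have hpr_pos : 0 < p.toReal := ENNReal.toReal_pos hp0 hptop
  have hF : eLpNorm (fun x => f₁ (x - z.1) * f₂ (x - z.2.1) * f₃ (x - z.2.2)) p volume ≤
      eLpNorm f₁ q₁ volume * eLpNorm f₂ q₂ volume * eLpNorm f₃ q₃ volume :=
    slice_bound f₁ f₂ f₃ hf₁ hf₂ hf₃ hexp z
  have heq : ∫⁻ x, (trih f₁ f₂ f₃ z x) ^ p.toReal ∂(volume : Measure ℝ) =
      (eLpNorm (fun x => f₁ (x - z.1) * f₂ (x - z.2.1) * f₃ (x - z.2.2)) p volume) ^ p.toReal := by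
    rw [eLpNorm_eq_lintegral_rpow_enorm_toReal hp0 hptop, one_div,
      ENNReal.rpow_inv_rpow hpr_pos.ne']
    exact lintegral_congr fun x => congrArg (· ^ p.toReal)
      (by simp [trih, enorm_mul]; rfl)
  rw [heq]
  exact ENNReal.rpow_le_rpow hF hpr_pos.le



/-- Main estimate, finite `p`. -/
lemma phi_rpow_lintegral_le (K : ℝ × ℝ × ℝ → ℂ) (f₁ f₂ f₃ : ℝ → ℂ)
    (hKm : AEStronglyMeasurable K (volume : Measure (ℝ × ℝ × ℝ)))
    (hf₁ : Measurable f₁) (hf₂ : Measurable f₂) (hf₃ : Measurable f₃)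
    {p q₁ q₂ q₃ : ℝ≥0∞} (hp : 1 ≤ p) (hexp : 1 / p = 1 / q₁ + 1 / q₂ + 1 / q₃)
    (hptop : p ≠ ⊤) :
    ∫⁻ x, (triPhi K f₁ f₂ f₃ x) ^ p.toReal ∂(volume : Measure ℝ) ≤
      ((∫⁻ z, (‖K z‖₊ : ℝ≥0∞) ∂(volume : Measure (ℝ × ℝ × ℝ))) *
        (eLpNorm f₁ q₁ volume * eLpNorm f₂ q₂ volume * eLpNorm f₃ q₃ volume)) ^ p.toReal := by
  have hp0 : p ≠ 0 := (lt_of_lt_of_le zero_lt_one hp).ne'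
  set pr : ℝ := p.toReal with hprdef
  set IK : ℝ≥0∞ := ∫⁻ z, (‖K z‖₊ : ℝ≥0∞) ∂(volume : Measure (ℝ × ℝ × ℝ)) with hIKdef
  set M : ℝ≥0∞ := eLpNorm f₁ q₁ volume * eLpNorm f₂ q₂ volume * eLpNorm f₃ q₃ volume with hMdef
  have hpr_pos : 0 < pr := ENNReal.toReal_pos hp0 hptop
  have hpr1 : 1 ≤ pr := by
    rw [hprdef, ← ENNReal.toReal_one]
    exact ENNReal.toReal_mono hptop hp
  have hnK : AEMeasurable (fun z => (‖K z‖₊ : ℝ≥0∞)) (volume : Measure (ℝ × ℝ × ℝ)) :=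
    hKm.enorm
  have hh : Measurable fun q : ℝ × (ℝ × ℝ × ℝ) => trih f₁ f₂ f₃ q.2 q.1 :=
    trih_measurable hf₁ hf₂ hf₃
  have hhz : ∀ x : ℝ, Measurable fun z => trih f₁ f₂ f₃ z x := by
    intro x
    unfold trih
    exact ((hf₁.comp (measurable_const.sub measurable_fst)).enorm.mul
      (hf₂.comp (measurable_const.sub measurable_snd.fst)).enorm).mul
      (hf₃.comp (measurable_const.sub measurable_snd.snd)).enorm
  have hhx : ∀ z : ℝ × ℝ × ℝ, Measurable fun x => trih f₁ f₂ f₃ z x := by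
    intro z
    unfold trih
    exact ((hf₁.comp (measurable_id.sub measurable_const)).enorm.mul
      (hf₂.comp (measurable_id.sub measurable_const)).enorm).mul
      (hf₃.comp (measurable_id.sub measurable_const)).enorm
  have hsl : ∀ z, ∫⁻ x, (trih f₁ f₂ f₃ z x) ^ pr ∂(volume : Measure ℝ) ≤ M ^ pr := fun z =>
    slice_lintegral f₁ f₂ f₃ hf₁ hf₂ hf₃ hexp hp0 hptop z
  have hnKP : AEMeasurable (fun q : ℝ × (ℝ × ℝ × ℝ) => (‖K q.2‖₊ : ℝ≥0∞))
      ((volume : Measure ℝ).prod (volume : Measure (ℝ × ℝ × ℝ))) :=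
    hnK.comp_quasiMeasurePreserving Measure.quasiMeasurePreserving_snd
  rcases eq_or_lt_of_le hpr1 with h1 | hlt
  · -- p = 1
    have hjoint : AEMeasurable
        (Function.uncurry fun (x : ℝ) (z : ℝ × ℝ × ℝ) => (‖K z‖₊ : ℝ≥0∞) * trih f₁ f₂ f₃ z x)
        ((volume : Measure ℝ).prod (volume : Measure (ℝ × ℝ × ℝ))) :=
      hnKP.mul hh.aemeasurable
    simp only [← h1, ENNReal.rpow_one]
    calc ∫⁻ x, triPhi K f₁ f₂ f₃ x ∂(volume : Measure ℝ)
        = ∫⁻ z, ∫⁻ x, (‖K z‖₊ : ℝ≥0∞) * trih f₁ f₂ f₃ z x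
            ∂(volume : Measure ℝ) ∂(volume : Measure (ℝ × ℝ × ℝ)) := by
          exact lintegral_lintegral_swap hjoint
      _ = ∫⁻ z, (‖K z‖₊ : ℝ≥0∞) * ∫⁻ x, trih f₁ f₂ f₃ z x ∂(volume : Measure ℝ)
            ∂(volume : Measure (ℝ × ℝ × ℝ)) :=
          lintegral_congr fun z => lintegral_const_mul'' _ (hhx z).aemeasurable
      _ ≤ ∫⁻ z, (‖K z‖₊ : ℝ≥0∞) * M ∂(volume : Measure (ℝ × ℝ × ℝ)) := by
          refine lintegral_mono fun z => mul_le_mul_right ?_ _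
          have := hsl z
          simpa [← h1] using this
      _ = IK * M := lintegral_mul_const'' M hnK
  · -- 1 < pr
    set cr : ℝ := pr.conjExponent with hcrdef
    have hpc : pr.HolderConjugate cr := Real.HolderConjugate.conjExponent hlt
    have hcc : cr.HolderConjugate pr := hpc.symm
    have hsum : 1 / cr + 1 / pr = 1 := by simpa [one_div] using hcc.inv_add_inv_eq_one
    have hcr_pos : 0 < cr := hcc.pos
    have hcr_ne : cr ≠ 0 := hcr_pos.ne'
    have hrpowK : ∀ c : ℝ, AEMeasurable (fun z => (‖K z‖₊ : ℝ≥0∞) ^ c)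
        (volume : Measure (ℝ × ℝ × ℝ)) := fun c =>
      ENNReal.continuous_rpow_const.measurable.comp_aemeasurable hnK
    have key : ∀ x : ℝ, triPhi K f₁ f₂ f₃ x ≤
        IK ^ (1 / cr) *
          (∫⁻ z, (‖K z‖₊ : ℝ≥0∞) * (trih f₁ f₂ f₃ z x) ^ pr
            ∂(volume : Measure (ℝ × ℝ × ℝ))) ^ (1 / pr) := by
      intro x
      have H := ENNReal.lintegral_mul_le_Lp_mul_Lq (volume : Measure (ℝ × ℝ × ℝ)) hcc
        (hrpowK (1 / cr)) ((hrpowK (1 / pr)).mul (hhz x).aemeasurable)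
      have eL : ∫⁻ z, ((fun z => (‖K z‖₊ : ℝ≥0∞) ^ (1 / cr)) *
            fun z => (‖K z‖₊ : ℝ≥0∞) ^ (1 / pr) * trih f₁ f₂ f₃ z x) z
            ∂(volume : Measure (ℝ × ℝ × ℝ)) = triPhi K f₁ f₂ f₃ x := by
        refine lintegral_congr fun z => ?_
        simp only [Pi.mul_apply]
        rw [← mul_assoc, ← ENNReal.rpow_add_of_nonneg _ _ (by positivity) (by positivity),
          hsum, ENNReal.rpow_one]
      have eR1 : ∫⁻ z, ((‖K z‖₊ : ℝ≥0∞) ^ (1 / cr)) ^ cr ∂(volume : Measure (ℝ × ℝ × ℝ))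
          = IK := by
        refine lintegral_congr fun z => ?_
        rw [one_div, ENNReal.rpow_inv_rpow hcr_ne]
      have eR2 : ∫⁻ z, ((‖K z‖₊ : ℝ≥0∞) ^ (1 / pr) * trih f₁ f₂ f₃ z x) ^ pr
          ∂(volume : Measure (ℝ × ℝ × ℝ))
          = ∫⁻ z, (‖K z‖₊ : ℝ≥0∞) * (trih f₁ f₂ f₃ z x) ^ pr
            ∂(volume : Measure (ℝ × ℝ × ℝ)) := by
        refine lintegral_congr fun z => ?_
        rw [ENNReal.mul_rpow_of_nonneg _ _ hpr_pos.le, one_div,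
          ENNReal.rpow_inv_rpow hpr_pos.ne']
      rw [← eL, ← eR1, ← eR2]
      exact H
    have key2 : ∀ x : ℝ, (triPhi K f₁ f₂ f₃ x) ^ pr ≤
        IK ^ ((1 / cr) * pr) *
          ∫⁻ z, (‖K z‖₊ : ℝ≥0∞) * (trih f₁ f₂ f₃ z x) ^ pr
            ∂(volume : Measure (ℝ × ℝ × ℝ)) := by
      intro x
      have := ENNReal.rpow_le_rpow (key x) hpr_pos.le
      rwa [ENNReal.mul_rpow_of_nonneg _ _ hpr_pos.le, ← ENNReal.rpow_mul,
        ← ENNReal.rpow_mul, one_div_mul_cancel hpr_pos.ne', ENNReal.rpow_one] at this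
    have hjointpr : AEMeasurable
        (Function.uncurry fun (x : ℝ) (z : ℝ × ℝ × ℝ) =>
          (‖K z‖₊ : ℝ≥0∞) * (trih f₁ f₂ f₃ z x) ^ pr)
        ((volume : Measure ℝ).prod (volume : Measure (ℝ × ℝ × ℝ))) :=
      hnKP.mul (ENNReal.continuous_rpow_const.measurable.comp hh).aemeasurable
    have hinner : AEMeasurable
        (fun x : ℝ => ∫⁻ z, (‖K z‖₊ : ℝ≥0∞) * (trih f₁ f₂ f₃ z x) ^ pr
          ∂(volume : Measure (ℝ × ℝ × ℝ))) (volume : Measure ℝ) :=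
      aemeasurable_lintegral_prod_right hjointpr
    have harith : (1 / cr) * pr + 1 = pr := by
      have h1cr : 1 / cr = 1 - 1 / pr := by linarith [hsum]
      rw [h1cr]
      field_simp
      ring
    calc ∫⁻ x, (triPhi K f₁ f₂ f₃ x) ^ pr ∂(volume : Measure ℝ)
        ≤ ∫⁻ x, IK ^ ((1 / cr) * pr) *
            ∫⁻ z, (‖K z‖₊ : ℝ≥0∞) * (trih f₁ f₂ f₃ z x) ^ pr
              ∂(volume : Measure (ℝ × ℝ × ℝ)) ∂(volume : Measure ℝ) :=
          lintegral_mono key2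
      _ = IK ^ ((1 / cr) * pr) *
            ∫⁻ x, ∫⁻ z, (‖K z‖₊ : ℝ≥0∞) * (trih f₁ f₂ f₃ z x) ^ pr
              ∂(volume : Measure (ℝ × ℝ × ℝ)) ∂(volume : Measure ℝ) :=
          lintegral_const_mul'' _ hinner
      _ = IK ^ ((1 / cr) * pr) *
            ∫⁻ z, ∫⁻ x, (‖K z‖₊ : ℝ≥0∞) * (trih f₁ f₂ f₃ z x) ^ pr
              ∂(volume : Measure ℝ) ∂(volume : Measure (ℝ × ℝ × ℝ)) := by
          rw [lintegral_lintegral_swap hjointpr]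
      _ = IK ^ ((1 / cr) * pr) *
            ∫⁻ z, (‖K z‖₊ : ℝ≥0∞) * ∫⁻ x, (trih f₁ f₂ f₃ z x) ^ pr
              ∂(volume : Measure ℝ) ∂(volume : Measure (ℝ × ℝ × ℝ)) := by
          congr 1
          exact lintegral_congr fun z => lintegral_const_mul'' _
            (ENNReal.continuous_rpow_const.measurable.comp (hhx z)).aemeasurable
      _ ≤ IK ^ ((1 / cr) * pr) *
            ∫⁻ z, (‖K z‖₊ : ℝ≥0∞) * M ^ pr ∂(volume : Measure (ℝ × ℝ × ℝ)) :=
          mul_le_mul_right (lintegral_mono fun z => mul_le_mul_right (hsl z) _) _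
      _ = IK ^ ((1 / cr) * pr) * (IK * M ^ pr) := by
          rw [lintegral_mul_const'' _ hnK]
      _ = (IK * M) ^ pr := by
          have hIKstep : IK ^ ((1 / cr) * pr) * IK = IK ^ pr := by
            calc IK ^ ((1 / cr) * pr) * IK = IK ^ ((1 / cr) * pr) * IK ^ (1 : ℝ) := by
                  rw [ENNReal.rpow_one]
              _ = IK ^ ((1 / cr) * pr + 1) :=
                  (ENNReal.rpow_add_of_nonneg _ _
                    (mul_nonneg (div_nonneg zero_le_one hcr_pos.le) hpr_pos.le)
                    zero_le_one).symm
              _ = IK ^ pr := by rw [harith]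
          rw [← mul_assoc, hIKstep]
          simp only [hMdef, ENNReal.mul_rpow_of_nonneg _ _ hpr_pos.le, mul_assoc]


/-- Main estimate, `p = ∞`. -/
lemma phi_le_of_top (K : ℝ × ℝ × ℝ → ℂ) (f₁ f₂ f₃ : ℝ → ℂ)
    (hKm : AEStronglyMeasurable K (volume : Measure (ℝ × ℝ × ℝ)))
    (hf₁ : Measurable f₁) (hf₂ : Measurable f₂) (hf₃ : Measurable f₃) :
    ∀ᵐ x ∂(volume : Measure ℝ), triPhi K f₁ f₂ f₃ x ≤
      (∫⁻ z, (‖K z‖₊ : ℝ≥0∞) ∂(volume : Measure (ℝ × ℝ × ℝ))) *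
        (eLpNormEssSup f₁ volume * eLpNormEssSup f₂ volume * eLpNormEssSup f₃ volume) := by
  have hb₁ := ae_shift_le f₁ hf₁ (fun z => z.1) measurable_fst sec_fst
  have hb₂ := ae_shift_le f₂ hf₂ (fun z => z.2.1) (measurable_snd.fst) sec_snd_fst
  have hb₃ := ae_shift_le f₃ hf₃ (fun z => z.2.2) (measurable_snd.snd) sec_snd_snd
  have hball : ∀ᵐ q ∂((volume : Measure ℝ).prod (volume : Measure (ℝ × ℝ × ℝ))),
      trih f₁ f₂ f₃ q.2 q.1 ≤
        eLpNormEssSup f₁ volume * eLpNormEssSup f₂ volume * eLpNormEssSup f₃ volume := by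
    filter_upwards [hb₁, hb₂, hb₃] with q h1 h2 h3
    exact mul_le_mul' (mul_le_mul' h1 h2) h3
  have hae := Measure.ae_ae_of_ae_prod hball
  filter_upwards [hae] with x hx
  calc triPhi K f₁ f₂ f₃ x
      ≤ ∫⁻ z, (‖K z‖₊ : ℝ≥0∞) *
          (eLpNormEssSup f₁ volume * eLpNormEssSup f₂ volume * eLpNormEssSup f₃ volume)
          ∂(volume : Measure (ℝ × ℝ × ℝ)) :=
        lintegral_mono_ae (hx.mono fun z hz => mul_le_mul_right hz _)
    _ = _ := lintegral_mul_const'' _ hKm.enorm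


end TrilinearAux

open TrilinearAux in
/-- Trilinear Young/Hölder inequality: the map
    x ↦ ∭ K(x-x₁, x-x₂, x-x₃) f₁(x₁) f₂(x₂) f₃(x₃) dx₁dx₂dx₃ lies in L^p with
    norm at most ‖K‖_{L¹}‖f₁‖_{L^{q₁}}‖f₂‖_{L^{q₂}}‖f₃‖_{L^{q₃}}
    when 1/p = 1/q₁ + 1/q₂ + 1/q₃. -/
theorem trilinear_kernel_holder
    (K : ℝ × ℝ × ℝ → ℂ) (hK : Integrable K (volume : Measure (ℝ × ℝ × ℝ)))
    (f₁ f₂ f₃ : ℝ → ℂ) (hf₁ : Measurable f₁) (hf₂ : Measurable f₂) (hf₃ : Measurable f₃)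
    (p q₁ q₂ q₃ : ℝ≥0∞) (hp : 1 ≤ p) (hq₁ : 1 ≤ q₁) (hq₂ : 1 ≤ q₂) (hq₃ : 1 ≤ q₃)
    (hexp : 1 / p = 1 / q₁ + 1 / q₂ + 1 / q₃)
    (hf₁m : MemLp f₁ q₁ (volume : Measure ℝ))
    (hf₂m : MemLp f₂ q₂ (volume : Measure ℝ))
    (hf₃m : MemLp f₃ q₃ (volume : Measure ℝ)) :
    MemLp (fun x : ℝ => ∫ x₁ : ℝ, ∫ x₂ : ℝ, ∫ x₃ : ℝ,
        K (x - x₁, x - x₂, x - x₃) * f₁ x₁ * f₂ x₂ * f₃ x₃) p (volume : Measure ℝ) ∧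
    eLpNorm (fun x : ℝ => ∫ x₁ : ℝ, ∫ x₂ : ℝ, ∫ x₃ : ℝ,
        K (x - x₁, x - x₂, x - x₃) * f₁ x₁ * f₂ x₂ * f₃ x₃) p (volume : Measure ℝ) ≤
      eLpNorm K 1 (volume : Measure (ℝ × ℝ × ℝ)) *
        eLpNorm f₁ q₁ (volume : Measure ℝ) * eLpNorm f₂ q₂ (volume : Measure ℝ) *
        eLpNorm f₃ q₃ (volume : Measure ℝ) := by
  have hKm : AEStronglyMeasurable K (volume : Measure (ℝ × ℝ × ℝ)) := hK.1
  have hIKne : (∫⁻ z, (‖K z‖₊ : ℝ≥0∞) ∂(volume : Measure (ℝ × ℝ × ℝ))) ≠ ⊤ := hK.2.ne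
  have hMne : eLpNorm f₁ q₁ volume * eLpNorm f₂ q₂ volume * eLpNorm f₃ q₃ volume ≠ ⊤ :=
    ENNReal.mul_ne_top (ENNReal.mul_ne_top hf₁m.eLpNorm_ne_top hf₂m.eLpNorm_ne_top)
      hf₃m.eLpNorm_ne_top
  have hIKM : (∫⁻ z, (‖K z‖₊ : ℝ≥0∞) ∂(volume : Measure (ℝ × ℝ × ℝ))) *
      (eLpNorm f₁ q₁ volume * eLpNorm f₂ q₂ volume * eLpNorm f₃ q₃ volume) ≠ ⊤ :=
    ENNReal.mul_ne_top hIKne hMne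
  have hp0 : p ≠ 0 := (lt_of_lt_of_le zero_lt_one hp).ne'
  have hnKP : AEMeasurable (fun q : ℝ × (ℝ × ℝ × ℝ) => (‖K q.2‖₊ : ℝ≥0∞))
      ((volume : Measure ℝ).prod (volume : Measure (ℝ × ℝ × ℝ))) :=
    hKm.enorm.comp_quasiMeasurePreserving Measure.quasiMeasurePreserving_snd
  have hΦm : AEMeasurable (triPhi K f₁ f₂ f₃) (volume : Measure ℝ) := by
    have := aemeasurable_lintegral_prod_right
      (hnKP.mul (trih_measurable hf₁ hf₂ hf₃).aemeasurable)
    exact this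
  -- shared endgame
  have endgame : (∀ᵐ x ∂(volume : Measure ℝ), triPhi K f₁ f₂ f₃ x < ⊤) →
      (∀ g : ℝ → ℂ, (∀ᵐ x ∂(volume : Measure ℝ), (‖g x‖₊ : ℝ≥0∞) ≤ triPhi K f₁ f₂ f₃ x) →
        eLpNorm g p volume ≤
          (∫⁻ z, (‖K z‖₊ : ℝ≥0∞) ∂(volume : Measure (ℝ × ℝ × ℝ))) *
            (eLpNorm f₁ q₁ volume * eLpNorm f₂ q₂ volume * eLpNorm f₃ q₃ volume)) →
      (MemLp (fun x : ℝ => ∫ x₁ : ℝ, ∫ x₂ : ℝ, ∫ x₃ : ℝ,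
          K (x - x₁, x - x₂, x - x₃) * f₁ x₁ * f₂ x₂ * f₃ x₃) p (volume : Measure ℝ) ∧
        eLpNorm (fun x : ℝ => ∫ x₁ : ℝ, ∫ x₂ : ℝ, ∫ x₃ : ℝ,
            K (x - x₁, x - x₂, x - x₃) * f₁ x₁ * f₂ x₂ * f₃ x₃) p (volume : Measure ℝ) ≤
          eLpNorm K 1 (volume : Measure (ℝ × ℝ × ℝ)) *
            eLpNorm f₁ q₁ (volume : Measure ℝ) * eLpNorm f₂ q₂ (volume : Measure ℝ) *
            eLpNorm f₃ q₃ (volume : Measure ℝ)) := by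
    intro hfin hbnd
    have hWsm : AEStronglyMeasurable (triW K f₁ f₂ f₃)
        ((volume : Measure ℝ).prod (volume : Measure (ℝ × ℝ × ℝ))) := by
      unfold triW
      have h0 : AEStronglyMeasurable (fun q : ℝ × (ℝ × ℝ × ℝ) => K q.2)
          ((volume : Measure ℝ).prod (volume : Measure (ℝ × ℝ × ℝ))) :=
        hKm.comp_quasiMeasurePreserving Measure.quasiMeasurePreserving_snd
      exact ((h0.mul
        (hf₁.comp (measurable_fst.sub measurable_snd.fst)).aestronglyMeasurable).mul
        (hf₂.comp (measurable_fst.sub measurable_snd.snd.fst)).aestronglyMeasurable).mul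
        (hf₃.comp (measurable_fst.sub measurable_snd.snd.snd)).aestronglyMeasurable
    have hWnorm : ∀ q : ℝ × (ℝ × ℝ × ℝ), (‖triW K f₁ f₂ f₃ q‖₊ : ℝ≥0∞) =
        (‖K q.2‖₊ : ℝ≥0∞) * trih f₁ f₂ f₃ q.2 q.1 := by
      intro q
      simp only [triW, trih, nnnorm_mul, ENNReal.coe_mul]
      ring
    have hTm : AEStronglyMeasurable
        (fun x : ℝ => ∫ z, triW K f₁ f₂ f₃ (x, z) ∂(volume : Measure (ℝ × ℝ × ℝ)))
        (volume : Measure ℝ) := hWsm.integral_prod_right'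
    have hTΦ : ∀ x : ℝ,
        (‖∫ z, triW K f₁ f₂ f₃ (x, z) ∂(volume : Measure (ℝ × ℝ × ℝ))‖₊ : ℝ≥0∞) ≤
          triPhi K f₁ f₂ f₃ x := by
      intro x
      refine (enorm_integral_le_lintegral_enorm _).trans_eq ?_
      exact lintegral_congr fun z => hWnorm (x, z)
    have hIntAE : ∀ᵐ x ∂(volume : Measure ℝ),
        Integrable (fun z => triW K f₁ f₂ f₃ (x, z)) (volume : Measure (ℝ × ℝ × ℝ)) := by
      filter_upwards [hWsm.prodMk_left, hfin] with x hm hfx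
      refine ⟨hm, ?_⟩
      have heq : ∫⁻ z, (‖triW K f₁ f₂ f₃ (x, z)‖₊ : ℝ≥0∞) ∂(volume : Measure (ℝ × ℝ × ℝ))
          = triPhi K f₁ f₂ f₃ x := lintegral_congr fun z => hWnorm (x, z)
      show (∫⁻ z, (‖triW K f₁ f₂ f₃ (x, z)‖₊ : ℝ≥0∞) ∂(volume : Measure (ℝ × ℝ × ℝ))) < ⊤
      rw [heq]; exact hfx
    have hG'T : ∀ᵐ x ∂(volume : Measure ℝ),
        (∫ z₁ : ℝ, ∫ z₂ : ℝ, ∫ z₃ : ℝ, K (z₁, z₂, z₃) * f₁ (x - z₁) * f₂ (x - z₂) * f₃ (x - z₃))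
          = ∫ z, triW K f₁ f₂ f₃ (x, z) ∂(volume : Measure (ℝ × ℝ × ℝ)) := by
      filter_upwards [hIntAE] with x hx
      have hx' : Integrable (fun z : ℝ × (ℝ × ℝ) => triW K f₁ f₂ f₃ (x, z))
          ((volume : Measure ℝ).prod (volume : Measure (ℝ × ℝ))) := by
        have := hx
        rwa [Measure.volume_eq_prod] at this
      have h1 : (∫ z, triW K f₁ f₂ f₃ (x, z) ∂(volume : Measure (ℝ × ℝ × ℝ)))
          = ∫ z₁ : ℝ, ∫ w : ℝ × ℝ, triW K f₁ f₂ f₃ (x, (z₁, w)) ∂(volume : Measure (ℝ × ℝ))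
              ∂(volume : Measure ℝ) := by
        rw [Measure.volume_eq_prod]
        exact integral_prod _ hx'
      rw [h1]
      apply integral_congr_ae
      filter_upwards [hx'.prod_right_ae] with z₁ h1z
      have h2 : (∫ w : ℝ × ℝ, triW K f₁ f₂ f₃ (x, (z₁, w)) ∂(volume : Measure (ℝ × ℝ)))
          = ∫ z₂ : ℝ, ∫ z₃ : ℝ, triW K f₁ f₂ f₃ (x, (z₁, (z₂, z₃))) ∂(volume : Measure ℝ)
              ∂(volume : Measure ℝ) := by
        rw [Measure.volume_eq_prod]
        refine integral_prod _ ?_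
        rwa [← Measure.volume_eq_prod]
      rw [h2]
      rfl
    -- pointwise substitution
    have step3 : ∀ x x₁ x₂ : ℝ,
        (∫ x₃ : ℝ, K (x - x₁, x - x₂, x - x₃) * f₁ x₁ * f₂ x₂ * f₃ x₃) =
        ∫ z₃ : ℝ, K (x - x₁, x - x₂, z₃) * f₁ x₁ * f₂ x₂ * f₃ (x - z₃) := by
      intro x x₁ x₂
      have h := integral_sub_left_eq_self
        (fun t : ℝ => K (x - x₁, x - x₂, t) * f₁ x₁ * f₂ x₂ * f₃ (x - t)) volume x
      simp only [sub_sub_cancel] at h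
      exact h
    have step2 : ∀ x x₁ : ℝ,
        (∫ x₂ : ℝ, ∫ z₃ : ℝ, K (x - x₁, x - x₂, z₃) * f₁ x₁ * f₂ x₂ * f₃ (x - z₃)) =
        ∫ z₂ : ℝ, ∫ z₃ : ℝ, K (x - x₁, z₂, z₃) * f₁ x₁ * f₂ (x - z₂) * f₃ (x - z₃) := by
      intro x x₁
      have h := integral_sub_left_eq_self
        (fun t : ℝ => ∫ z₃ : ℝ, K (x - x₁, t, z₃) * f₁ x₁ * f₂ (x - t) * f₃ (x - z₃)) volume x
      simp only [sub_sub_cancel] at h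
      exact h
    have step1 : ∀ x : ℝ,
        (∫ x₁ : ℝ, ∫ z₂ : ℝ, ∫ z₃ : ℝ, K (x - x₁, z₂, z₃) * f₁ x₁ * f₂ (x - z₂) * f₃ (x - z₃)) =
        ∫ z₁ : ℝ, ∫ z₂ : ℝ, ∫ z₃ : ℝ, K (z₁, z₂, z₃) * f₁ (x - z₁) * f₂ (x - z₂) * f₃ (x - z₃) := by
      intro x
      have h := integral_sub_left_eq_self
        (fun t : ℝ => ∫ z₂ : ℝ, ∫ z₃ : ℝ, K (t, z₂, z₃) * f₁ (x - t) * f₂ (x - z₂) * f₃ (x - z₃))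
        volume x
      simp only [sub_sub_cancel] at h
      exact h
    have hGsub : ∀ x : ℝ,
        (∫ x₁ : ℝ, ∫ x₂ : ℝ, ∫ x₃ : ℝ, K (x - x₁, x - x₂, x - x₃) * f₁ x₁ * f₂ x₂ * f₃ x₃) =
        ∫ z₁ : ℝ, ∫ z₂ : ℝ, ∫ z₃ : ℝ, K (z₁, z₂, z₃) * f₁ (x - z₁) * f₂ (x - z₂) * f₃ (x - z₃) := by
      intro x
      simp_rw [step3]
      simp_rw [step2]
      exact step1 x
    have hGT : (fun x : ℝ => ∫ x₁ : ℝ, ∫ x₂ : ℝ, ∫ x₃ : ℝ,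
        K (x - x₁, x - x₂, x - x₃) * f₁ x₁ * f₂ x₂ * f₃ x₃) =ᵐ[(volume : Measure ℝ)]
        (fun x : ℝ => ∫ z, triW K f₁ f₂ f₃ (x, z) ∂(volume : Measure (ℝ × ℝ × ℝ))) := by
      filter_upwards [hG'T] with x hx
      rw [hGsub x]
      exact hx
    have hb := hbnd (fun x : ℝ => ∫ z, triW K f₁ f₂ f₃ (x, z) ∂(volume : Measure (ℝ × ℝ × ℝ)))
      (Filter.Eventually.of_forall hTΦ)
    have hIK1 : eLpNorm K 1 (volume : Measure (ℝ × ℝ × ℝ)) =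
        ∫⁻ z, (‖K z‖₊ : ℝ≥0∞) ∂(volume : Measure (ℝ × ℝ × ℝ)) :=
      eLpNorm_one_eq_lintegral_enorm
    constructor
    · exact ⟨hTm.congr hGT.symm, by
        rw [eLpNorm_congr_ae hGT]
        exact lt_of_le_of_lt hb hIKM.lt_top⟩
    · rw [eLpNorm_congr_ae hGT]
      refine le_trans hb (le_of_eq ?_)
      rw [hIK1]
      ring
  by_cases hptop : p = ⊤
  · -- p = ∞
    have h0 : (1 / q₁ + 1 / q₂ + 1 / q₃ : ℝ≥0∞) = 0 := by
      rw [← hexp, hptop]; simp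
    have hq : (q₁ = ⊤ ∧ q₂ = ⊤) ∧ q₃ = ⊤ := by
      simpa [add_eq_zero] using h0
    have hq₁t : q₁ = ⊤ := hq.1.1
    have hq₂t : q₂ = ⊤ := hq.1.2
    have hq₃t : q₃ = ⊤ := hq.2
    have hΦle : ∀ᵐ x ∂(volume : Measure ℝ), triPhi K f₁ f₂ f₃ x ≤
        (∫⁻ z, (‖K z‖₊ : ℝ≥0∞) ∂(volume : Measure (ℝ × ℝ × ℝ))) *
          (eLpNorm f₁ q₁ volume * eLpNorm f₂ q₂ volume * eLpNorm f₃ q₃ volume) := by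
      have h := phi_le_of_top K f₁ f₂ f₃ hKm hf₁ hf₂ hf₃
      simpa [hq₁t, hq₂t, hq₃t, eLpNorm_exponent_top] using h
    have hfin : ∀ᵐ x ∂(volume : Measure ℝ), triPhi K f₁ f₂ f₃ x < ⊤ :=
      hΦle.mono fun x hx => lt_of_le_of_lt hx hIKM.lt_top
    refine endgame hfin ?_
    intro g hg
    rw [hptop, eLpNorm_exponent_top]
    refine essSup_le_of_ae_le _ ?_
    filter_upwards [hg, hΦle] with x h1 h2 using le_trans h1 h2
  · -- p < ∞
    have Est := phi_rpow_lintegral_le K f₁ f₂ f₃ hKm hf₁ hf₂ hf₃ hp hexp hptop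
    have hpr_pos : 0 < p.toReal := ENNReal.toReal_pos hp0 hptop
    have hfin : ∀ᵐ x ∂(volume : Measure ℝ), triPhi K f₁ f₂ f₃ x < ⊤ := by
      have h1 : ∫⁻ x, (triPhi K f₁ f₂ f₃ x) ^ p.toReal ∂(volume : Measure ℝ) ≠ ⊤ :=
        (lt_of_le_of_lt Est (ENNReal.rpow_lt_top_of_nonneg hpr_pos.le hIKM)).ne
      have h2 := ae_lt_top'
        (ENNReal.continuous_rpow_const.measurable.comp_aemeasurable hΦm) h1
      exact h2.mono fun x hx => (ENNReal.rpow_lt_top_iff_of_pos hpr_pos).mp hx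
    refine endgame hfin ?_
    intro g hg
    rw [eLpNorm_eq_lintegral_rpow_enorm_toReal hp0 hptop]
    have hmono : ∫⁻ x, (‖g x‖₊ : ℝ≥0∞) ^ p.toReal ∂(volume : Measure ℝ) ≤
        ∫⁻ x, (triPhi K f₁ f₂ f₃ x) ^ p.toReal ∂(volume : Measure ℝ) :=
      lintegral_mono_ae (hg.mono fun x hx => ENNReal.rpow_le_rpow hx hpr_pos.le)
    calc (∫⁻ x, (‖g x‖₊ : ℝ≥0∞) ^ p.toReal ∂(volume : Measure ℝ)) ^ (1 / p.toReal)
        ≤ (∫⁻ x, (triPhi K f₁ f₂ f₃ x) ^ p.toReal ∂(volume : Measure ℝ)) ^ (1 / p.toReal) :=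
          ENNReal.rpow_le_rpow hmono (by positivity)
      _ ≤ (((∫⁻ z, (‖K z‖₊ : ℝ≥0∞) ∂(volume : Measure (ℝ × ℝ × ℝ))) *
            (eLpNorm f₁ q₁ volume * eLpNorm f₂ q₂ volume * eLpNorm f₃ q₃ volume)) ^ p.toReal)
              ^ (1 / p.toReal) :=
          ENNReal.rpow_le_rpow Est (by positivity)
      _ = _ := by
          rw [one_div, ENNReal.rpow_rpow_inv hpr_pos.ne']
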